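/- Let 𝔤 be simply laced of rank r and define a ℤ-module V with basis c, o_1, …, o_r and the following operators for i = 1,…,r: s_i(c) = −c; s_i(o_i) = o_i; s_i(o_j) = −o_j if (α_i,α_j) = 0; s_i(o_j) = −o_j − o_i if (α_i,α_j) = −1; t_γ(c) = c and t_γ(o_i) = o_i + ⟨α_i, γ⟩ c for γ ∈ Q^∨. Then the map sending K ⊗ 1 ↦ c and α_i^∨ ⊗ 1 ↦ −o_i defines an isomorphism of Ŵ-modules (𝔥_ℤ ⊕ ℤK) ⊗ ℤ_sign → V, where Ŵ acts on 𝔥_ℤ ⊕ ℤK by s_i(x) = x − ⟨α_i,x⟩α_i^∨ and t_γ(x) = x − (x,γ)K. -/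

import Mathlib

/-- Let `𝔤` be simply laced of rank `r` with Cartan matrix `A`
(`A i i = 2`, `A i j ∈ {0, −1}` for `i ≠ j`, symmetric).  Let `V` be the ℤ-module with basis
`c, o_1, …, o_r` (modelled as `ℤ × (Fin r → ℤ)`) with the operators (`i = 1,…,r`):
`s_i(c) = −c`; `s_i(o_i) = o_i`; `s_i(o_j) = −o_j` if `(α_i,α_j) = 0`;
`s_i(o_j) = −o_j − o_i` if `(α_i,α_j) = −1`; `t_γ(c) = c` and
`t_γ(o_i) = o_i + ⟨α_i, γ⟩c` for `γ ∈ Q^∨`.  Then the map `K ⊗ 1 ↦ c`,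
`α_i^∨ ⊗ 1 ↦ −o_i` is an isomorphism of `Ŵ`-modules `(𝔥_ℤ ⊕ ℤK) ⊗ ℤ_sign → V`, where `Ŵ`
acts on `𝔥_ℤ ⊕ ℤK` (modelled as `(Fin r → ℤ) × ℤ`) by `s_i(x) = x − ⟨α_i,x⟩α_i^∨` and
`t_γ(x) = x − (x,γ)K`, and the sign twist negates the action of each `s_i`. -/
theorem stmt_18 (r : ℕ) (hr : 1 ≤ r) (A : Fin r → Fin r → ℤ)
    (hAdiag : ∀ i, A i i = 2) (hAsymm : ∀ i j, A i j = A j i)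
    (hAoff : ∀ i j, i ≠ j → A i j = 0 ∨ A i j = -1) :
    -- pairing ⟨α_i, x⟩ = Σ_j A i j x_j; form (x, γ) = Σ_{j,j'} x_j A j j' γ_{j'}
    let pair : Fin r → (Fin r → ℤ) → ℤ := fun i x => ∑ j, A i j * x j
    -- action of s_i and t_γ on 𝔥_ℤ ⊕ ℤK (sign twist applied below)
    let S : Fin r → ((Fin r → ℤ) × ℤ) → ((Fin r → ℤ) × ℤ) :=
      fun i v => (v.1 - pair i v.1 • Pi.single i 1, v.2)
    let T : (Fin r → ℤ) → ((Fin r → ℤ) × ℤ) → ((Fin r → ℤ) × ℤ) :=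
      fun γ v => (v.1, v.2 - ∑ j, v.1 j * (∑ j', A j j' * γ j'))
    -- action of s_i and t_γ on V = ℤc ⊕ ⊕_i ℤo_i
    let σ : Fin r → (ℤ × (Fin r → ℤ)) → (ℤ × (Fin r → ℤ)) :=
      fun i w => (-w.1, fun mIdx => if mIdx = i then
        w.2 i - ∑ j ∈ Finset.univ.filter (fun j => j ≠ i ∧ A i j = -1), w.2 j
        else -w.2 mIdx)
    let τ : (Fin r → ℤ) → (ℤ × (Fin r → ℤ)) → (ℤ × (Fin r → ℤ)) :=
      fun γ w => (w.1 + ∑ j, w.2 j * (∑ j', A j j' * γ j'), w.2)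
    -- the map K ↦ c, α_i^∨ ↦ −o_i
    let Φ : ((Fin r → ℤ) × ℤ) → (ℤ × (Fin r → ℤ)) := fun v => (v.2, fun i => -v.1 i)
    Function.Bijective Φ ∧
    (∀ (i : Fin r) (v : (Fin r → ℤ) × ℤ), Φ (-(S i v)) = σ i (Φ v)) ∧
    (∀ (γ : Fin r → ℤ) (v : (Fin r → ℤ) × ℤ), Φ (T γ v) = τ γ (Φ v)) := by

  intro pair S T σ τ Φ
  have key : ∀ (i : Fin r) (x : Fin r → ℤ),
      pair i x = 2 * x i - ∑ j ∈ Finset.univ.filter (fun j => j ≠ i ∧ A i j = -1), x j := by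
    intro i x
    have hsplit := Finset.sum_filter_add_sum_filter_not Finset.univ
      (fun j => j ≠ i ∧ A i j = -1) (fun j => A i j * x j)
    have h1 : ∑ j ∈ Finset.univ.filter (fun j => j ≠ i ∧ A i j = -1), A i j * x j
        = ∑ j ∈ Finset.univ.filter (fun j => j ≠ i ∧ A i j = -1), -x j := by
      refine Finset.sum_congr rfl ?_
      intro j hj
      simp only [Finset.mem_filter] at hj
      rw [hj.2.2]; ring
    have h2 : ∑ j ∈ Finset.univ.filter (fun j => ¬(j ≠ i ∧ A i j = -1)), A i j * x j
        = 2 * x i := by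
      rw [Finset.sum_eq_single_of_mem i]
      · rw [hAdiag i]
      · simp
      · intro j hj hji
        simp only [Finset.mem_filter, not_and] at hj
        rcases hAoff i j (Ne.symm hji) with h | h
        · rw [h]; ring
        · exact absurd h (hj.2 hji)
    have : pair i x = ∑ j, A i j * x j := rfl
    rw [this, ← hsplit, h1, h2, Finset.sum_neg_distrib]
    ring
  refine ⟨?_, ?_, ?_⟩
  · constructor
    · intro v w h
      simp only [Φ, Prod.mk.injEq] at h
      obtain ⟨h1, h2⟩ := h
      ext x
      · have := congrFun h2 x
        omega
      · exact h1
    · intro w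
      exact ⟨(fun i => -w.2 i, w.1), by simp [Φ]⟩
  · intro i v
    simp only [Φ, S, σ, Prod.mk.injEq, Prod.fst_neg, Prod.snd_neg, Pi.neg_apply]
    constructor
    · trivial
    · funext m
      by_cases hm : m = i
      · subst hm
        simp only [if_pos, Pi.sub_apply, Pi.smul_apply, Pi.single_eq_same, smul_eq_mul,
          mul_one, key, eq_self_iff_true, if_true]
        rw [Finset.sum_neg_distrib]
        ring
      · simp only [if_neg hm, Pi.sub_apply, Pi.smul_apply, smul_eq_mul,
          Pi.single_eq_of_ne hm, mul_zero, sub_zero, neg_neg]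
  · intro γ v
    simp only [Φ, T, τ, Prod.mk.injEq]
    constructor
    · rw [Finset.sum_congr rfl (fun j _ => by ring : ∀ j ∈ Finset.univ,
        (-v.1 j) * (∑ j', A j j' * γ j') = -(v.1 j * (∑ j', A j j' * γ j')))]
      rw [Finset.sum_neg_distrib]
      ring
    · trivial
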